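/- Let 0 < b < a be real numbers and let K be Rudin's Klein bottle with parameters a, b. Then the annulus A = {(z,0) ∈ ℂ² : (a−b)² ≤ |z| ≤ (a+b)²} is contained in the rational hull h_R(K); equivalently, every polynomial P : ℂ² → ℂ that is nonvanishing on K is also nonvanishing on A. -/

import Mathlib

open Complex Set

/-- Evaluation of a polynomial in two variables at a point of `ℂ × ℂ`. -/
noncomputable def evalP (P : MvPolynomial (Fin 2) ℂ) (x : ℂ × ℂ) : ℂ :=
  MvPolynomial.eval ![x.1, x.2] P

/-- `g(φ) = a + b cos φ`, as a complex number. -/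
noncomputable def gK (a b : ℝ) (φ : ℝ) : ℂ := ((a + b * Real.cos φ : ℝ) : ℂ)

/-- `h(φ) = sin φ + i sin 2φ`. -/
noncomputable def hK (φ : ℝ) : ℂ := (Real.sin φ : ℂ) + Complex.I * (Real.sin (2 * φ) : ℂ)

/-- Rudin's Klein bottle with parameters `a, b`:
`K = {(e^{2iθ} g(φ)², e^{iθ} g(φ) h(φ)) : θ, φ ∈ [−π, π)}`. -/
noncomputable def rudinKlein (a b : ℝ) : Set (ℂ × ℂ) :=
  {x | ∃ θ ∈ Set.Ico (-Real.pi) Real.pi, ∃ φ ∈ Set.Ico (-Real.pi) Real.pi,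
    x = (Complex.exp (2 * Complex.I * (θ : ℂ)) * gK a b φ ^ 2,
         Complex.exp (Complex.I * (θ : ℂ)) * gK a b φ * hK φ)}

/-- The closed annulus `A = {(z,0) : (a−b)² ≤ |z| ≤ (a+b)²}` in the plane `w = 0`. -/
def annulusA (a b : ℝ) : Set (ℂ × ℂ) :=
  {x | x.2 = 0 ∧ (a - b) ^ 2 ≤ ‖x.1‖ ∧ ‖x.1‖ ≤ (a + b) ^ 2}

/-- The rational hull of a compact set `X ⊆ ℂ²`. -/
def rationalHull (X : Set (ℂ × ℂ)) : Set (ℂ × ℂ) :=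
  {x | ∀ P : MvPolynomial (Fin 2) ℂ, evalP P x ∈ evalP P '' X}


/-- Log-derivative of a split polynomial written via its root multiset. -/
lemma logderiv_prod_roots (c : ℂ) (s : Multiset ℂ) (lam : ℂ)
    (h : Polynomial.eval lam (Polynomial.C c * (s.map fun ρ => Polynomial.X - Polynomial.C ρ).prod) ≠ 0) :
    Polynomial.eval lam (Polynomial.derivative
        (Polynomial.C c * (s.map fun ρ => Polynomial.X - Polynomial.C ρ).prod))
      / Polynomial.eval lam (Polynomial.C c * (s.map fun ρ => Polynomial.X - Polynomial.C ρ).prod)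
      = (s.map fun ρ => (lam - ρ)⁻¹).sum := by
  induction s using Multiset.induction_on with
  | empty => simp
  | cons ρ s ih =>
      have hrw : (Polynomial.C c * ((ρ ::ₘ s).map fun ρ => Polynomial.X - Polynomial.C ρ).prod)
          = (Polynomial.X - Polynomial.C ρ) *
            (Polynomial.C c * (s.map fun ρ => Polynomial.X - Polynomial.C ρ).prod) := by
        rw [Multiset.map_cons, Multiset.prod_cons]; ring
      rw [hrw] at h ⊢
      set Q := Polynomial.C c * (s.map fun ρ => Polynomial.X - Polynomial.C ρ).prod with hQ
      have h1 : lam - ρ ≠ 0 := by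
        intro h0
        apply h; simp [h0]
      have h2 : Polynomial.eval lam Q ≠ 0 := by
        intro h0; apply h; simp [h0]
      have ihh := ih h2
      rw [Multiset.map_cons, Multiset.sum_cons, ← ihh]
      simp only [Polynomial.derivative_mul, Polynomial.derivative_sub, Polynomial.derivative_X,
        Polynomial.derivative_C, sub_zero, one_mul, Polynomial.eval_add, Polynomial.eval_mul,
        Polynomial.eval_sub, Polynomial.eval_X, Polynomial.eval_C]
      field_simp

/-- `∮ (z-ρ)⁻¹` over the circle of radius `r`: `2πi` if `ρ` inside, `0` if outside. -/
lemma circleIntegral_inv_single {ρ : ℂ} {r : ℝ} (hr : 0 < r) (hne : ‖ρ‖ ≠ r) :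
    (∮ z in C(0, r), (z - ρ)⁻¹)
      = if ‖ρ‖ < r then (2 * Real.pi * Complex.I) else 0 := by
  by_cases hlt : ‖ρ‖ < r
  · rw [if_pos hlt]
    exact circleIntegral.integral_sub_inv_of_mem_ball (by simpa [Complex.norm_def] using hlt)
  · rw [if_neg hlt]
    have hgt : r < ‖ρ‖ := lt_of_le_of_ne (not_lt.1 hlt) (Ne.symm hne)
    have hball : ∀ z ∈ Metric.closedBall (0:ℂ) r, z ≠ ρ := by
      intro z hz h; subst h
      simp only [Metric.mem_closedBall, dist_zero_right] at hz
      exact absurd (lt_of_lt_of_le hgt hz) (lt_irrefl _)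
    apply Complex.circleIntegral_eq_zero_of_differentiable_on_off_countable hr.le
      Set.countable_empty
    · exact (continuousOn_id.sub continuousOn_const).inv₀
        (fun w hw => sub_ne_zero.2 (hball w hw))
    · intro z hz
      refine DifferentiableAt.inv (by fun_prop) ?_
      exact sub_ne_zero.2 (hball z (Metric.ball_subset_closedBall hz.1))

/-- Circle integral of a sum of Cauchy kernels over a multiset, with integrability. -/
lemma circleIntegral_multiset_sum (r : ℝ) (hr : 0 < r) (s : Multiset ℂ)
    (hs : ∀ ρ ∈ s, ‖ρ‖ ≠ r) :
    CircleIntegrable (fun z => (s.map fun ρ => (z - ρ)⁻¹).sum) 0 r ∧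
    (∮ z in C(0, r), (s.map fun ρ => (z - ρ)⁻¹).sum)
      = (s.map fun ρ => if ‖ρ‖ < r then (2 * Real.pi * Complex.I) else 0).sum := by
  induction s using Multiset.induction_on with
  | empty => simp [CircleIntegrable, circleIntegral]
  | cons ρ t ih =>
      have hρ : ‖ρ‖ ≠ r := hs ρ (Multiset.mem_cons_self _ _)
      have ht := ih (fun x hx => hs x (Multiset.mem_cons_of_mem hx))
      have hint : CircleIntegrable (fun z => (z - ρ)⁻¹) 0 r := by
        apply ContinuousOn.circleIntegrable hr.le
        apply (continuousOn_id.sub continuousOn_const).inv₀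
        intro w hw
        apply sub_ne_zero.2
        intro h; subst h
        exact hρ (by simpa [Complex.norm_def] using hw)
      constructor
      · simpa [Multiset.map_cons, Multiset.sum_cons, Pi.add_def] using hint.add ht.1
      · have hadd : (∮ z in C(0, r), ((z - ρ)⁻¹ + (t.map fun ρ => (z - ρ)⁻¹).sum))
            = (∮ z in C(0, r), (z - ρ)⁻¹) + ∮ z in C(0, r), (t.map fun ρ => (z - ρ)⁻¹).sum := by
          simp only [circleIntegral, smul_eq_mul]
          rw [← intervalIntegral.integral_add]
          · congr 1; funext θ; ring
          · simpa only [deriv_circleMap, smul_eq_mul] using hint.out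
          · simpa only [deriv_circleMap, smul_eq_mul] using ht.1.out
        simp only [Multiset.map_cons, Multiset.sum_cons]
        rw [hadd, ht.2, circleIntegral_inv_single hr hρ]

lemma sum_if_eq_card (s : Multiset ℂ) (r : ℝ) :
    (s.map fun ρ => if ‖ρ‖ < r then (2 * Real.pi * Complex.I) else 0).sum
      = (2 * Real.pi * Complex.I) * (Multiset.card (s.filter fun ρ => ‖ρ‖ < r) : ℂ) := by
  induction s using Multiset.induction_on with
  | empty => simp
  | cons ρ t ih =>
      rw [Multiset.map_cons, Multiset.sum_cons, ih, Multiset.filter_cons]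
      by_cases hρ : ‖ρ‖ < r
      · simp only [if_pos hρ, Multiset.card_add, Multiset.card_singleton]
        push_cast; ring
      · simp [if_neg hρ]

/-- The argument principle for polynomials over a circle centered at the origin. -/
lemma argument_principle_poly (q : Polynomial ℂ) (r : ℝ) (hr : 0 < r)
    (h : ∀ z : ℂ, ‖z‖ = r → Polynomial.eval z q ≠ 0) :
    (∮ z in C(0, r), Polynomial.eval z q.derivative / Polynomial.eval z q)
      = (2 * Real.pi * Complex.I) *
        (Multiset.card (q.roots.filter fun ρ => ‖ρ‖ < r) : ℂ) := by
  have hroots_ne : ∀ ρ ∈ q.roots, ‖ρ‖ ≠ r := by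
    intro ρ hρ hc
    exact h ρ hc (Polynomial.isRoot_of_mem_roots hρ)
  have hsplit : q = Polynomial.C q.leadingCoeff *
      (q.roots.map fun ρ => Polynomial.X - Polynomial.C ρ).prod :=
    Polynomial.Splits.eq_prod_roots (IsAlgClosed.splits q)
  have heq : Set.EqOn (fun z => Polynomial.eval z q.derivative / Polynomial.eval z q)
      (fun z => (q.roots.map fun ρ => (z - ρ)⁻¹).sum) (Metric.sphere (0:ℂ) r) := by
    intro z hz
    have hz' : ‖z‖ = r := by simpa [Complex.norm_def] using hz
    have hne : Polynomial.eval z q ≠ 0 := h z hz'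
    have := logderiv_prod_roots q.leadingCoeff q.roots z (by rw [← hsplit]; exact hne)
    simp only
    conv_lhs => rw [hsplit]
    exact this
  rw [circleIntegral.integral_congr hr.le heq,
    (circleIntegral_multiset_sum r hr q.roots hroots_ne).2, sum_if_eq_card]

/-- The one-variable polynomial `λ ↦ P(λ², tλ)`. -/
noncomputable def QQ (P : MvPolynomial (Fin 2) ℂ) (t : ℂ) : Polynomial ℂ :=
  MvPolynomial.aeval ![Polynomial.X ^ 2, Polynomial.C t * Polynomial.X] P

lemma eval_QQ (P : MvPolynomial (Fin 2) ℂ) (t lam : ℂ) :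
    Polynomial.eval lam (QQ P t) = MvPolynomial.eval ![lam ^ 2, t * lam] P := by
  have h := MvPolynomial.comp_aeval_apply (R := ℂ)
    (f := ![Polynomial.X ^ 2, Polynomial.C t * Polynomial.X])
    (Polynomial.aeval lam) P
  have h2 : (fun i => Polynomial.aeval lam (![Polynomial.X ^ 2,
      Polynomial.C t * Polynomial.X] i)) = ![lam ^ 2, t * lam] := by
    funext i; fin_cases i <;> simp
  rw [h2] at h
  rw [show Polynomial.eval lam (QQ P t) = Polynomial.aeval lam (QQ P t) by
    simp [Polynomial.coe_aeval_eq_eval]]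
  rw [QQ, h, MvPolynomial.aeval_def, MvPolynomial.eval, ← MvPolynomial.aeval_def]
  simp [MvPolynomial.aeval_def]

lemma cont_QQ (P : MvPolynomial (Fin 2) ℂ) :
    Continuous (fun p : ℂ × ℂ => Polynomial.eval p.2 (QQ P p.1)) ∧
    Continuous (fun p : ℂ × ℂ => Polynomial.eval p.2 (Polynomial.derivative (QQ P p.1))) := by
  induction P using MvPolynomial.induction_on with
  | C a =>
      constructor <;> simp [QQ, MvPolynomial.algebraMap_eq] <;> exact continuous_const
  | add p q hp hq =>
      have e1 : ∀ t : ℂ, QQ (p + q) t = QQ p t + QQ q t := fun t => map_add _ _ _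
      constructor
      · simpa [e1, Pi.add_def] using hp.1.add hq.1
      · simpa [e1, Polynomial.derivative_add, Pi.add_def] using hp.2.add hq.2
  | mul_X p i hp =>
      have e1 : ∀ t : ℂ, QQ (p * MvPolynomial.X i) t
          = QQ p t * (![Polynomial.X ^ 2, Polynomial.C t * Polynomial.X] i) := fun t => by
        rw [QQ, map_mul, MvPolynomial.aeval_X]; rfl
      fin_cases i <;> beta_reduce at e1 ⊢ <;>
        simp only [Fin.zero_eta, Fin.mk_one, Matrix.cons_val_zero, Matrix.cons_val_one,
          Matrix.head_cons] at e1 ⊢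
      · constructor
        · have e2 : (fun q : ℂ × ℂ => Polynomial.eval q.2 (QQ (p * MvPolynomial.X 0) q.1))
              = fun q : ℂ × ℂ => Polynomial.eval q.2 (QQ p q.1) * q.2 ^ 2 := by
            funext q; rw [e1]; simp
          rw [e2]; exact hp.1.mul (continuous_snd.pow 2)
        · have e2 : (fun q : ℂ × ℂ =>
                Polynomial.eval q.2 (Polynomial.derivative (QQ (p * MvPolynomial.X 0) q.1)))
              = fun q : ℂ × ℂ => Polynomial.eval q.2 (Polynomial.derivative (QQ p q.1)) * q.2 ^ 2
                  + Polynomial.eval q.2 (QQ p q.1) * (2 * q.2) := by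
            funext q; rw [e1]
            simp [Polynomial.derivative_mul, Polynomial.derivative_X_pow]
            exact Or.inl (Or.inl (by norm_num))
          rw [e2]
          exact (hp.2.mul (continuous_snd.pow 2)).add
            (hp.1.mul (continuous_const.mul continuous_snd))
      · constructor
        · have e2 : (fun q : ℂ × ℂ => Polynomial.eval q.2 (QQ (p * MvPolynomial.X 1) q.1))
              = fun q : ℂ × ℂ => Polynomial.eval q.2 (QQ p q.1) * (q.1 * q.2) := by
            funext q; rw [e1]; simp
          rw [e2]; exact hp.1.mul (continuous_fst.mul continuous_snd)
        · have e2 : (fun q : ℂ × ℂ =>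
                Polynomial.eval q.2 (Polynomial.derivative (QQ (p * MvPolynomial.X 1) q.1)))
              = fun q : ℂ × ℂ => Polynomial.eval q.2 (Polynomial.derivative (QQ p q.1)) * (q.1 * q.2)
                  + Polynomial.eval q.2 (QQ p q.1) * q.1 := by
            funext q; rw [e1]
            simp [Polynomial.derivative_mul]
            try ring
          rw [e2]
          exact (hp.2.mul (continuous_fst.mul continuous_snd)).add (hp.1.mul continuous_fst)

lemma natcast_ne_add_half (m k : ℕ) : (m : ℝ) ≠ (k : ℝ) + 1/2 := by
  intro h
  have h2 : ((2 * m : ℕ) : ℝ) = ((2 * k + 1 : ℕ) : ℝ) := by push_cast; linarith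
  have := Nat.cast_injective h2
  omega

/-- The number of roots of `q φ` inside the circle of radius `r φ` is the same at `φ = 0`
and `φ = π`, provided `q φ` never vanishes on the circle for `φ ∈ [0, π]`. -/
lemma count_constant (q : ℝ → Polynomial ℂ) (r : ℝ → ℝ)
    (hq1 : Continuous (fun p : ℝ × ℂ => Polynomial.eval p.2 (q p.1)))
    (hq2 : Continuous (fun p : ℝ × ℂ => Polynomial.eval p.2 (Polynomial.derivative (q p.1))))
    (hr : Continuous r) (hrpos : ∀ φ, 0 < r φ)
    (hne : ∀ φ ∈ Set.Icc (0:ℝ) Real.pi, ∀ z : ℂ, ‖z‖ = r φ →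
      Polynomial.eval z (q φ) ≠ 0) :
    Multiset.card ((q 0).roots.filter fun ρ => ‖ρ‖ < r 0)
      = Multiset.card ((q Real.pi).roots.filter fun ρ => ‖ρ‖ < r Real.pi) := by
  set X := Set.Icc (0:ℝ) Real.pi
  haveI : ConnectedSpace X := Subtype.connectedSpace
    ⟨⟨0, by constructor <;> [rfl; exact Real.pi_pos.le]⟩, isPreconnected_Icc⟩
  set N : ℝ → ℕ := fun φ => Multiset.card ((q φ).roots.filter fun ρ => ‖ρ‖ < r φ)
    with hN
  set F : ℝ → ℂ := fun φ =>
    ∮ z in C(0, r φ), Polynomial.eval z (Polynomial.derivative (q φ)) / Polynomial.eval z (q φ)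
    with hFdef
  have hF : ∀ φ ∈ X, F φ = (2 * Real.pi * Complex.I) * (N φ : ℂ) := by
    intro φ hφ
    exact argument_principle_poly (q φ) (r φ) (hrpos φ) (hne φ hφ)
  -- continuity of `F` on `X`
  have hcm : Continuous (fun p : X × ℝ => ((r ↑p.1 : ℝ) : ℂ) * Complex.exp (↑p.2 * Complex.I)) := by
    apply Continuous.mul
    · exact Complex.continuous_ofReal.comp (hr.comp (continuous_subtype_val.comp continuous_fst))
    · exact Complex.continuous_exp.comp
        ((Complex.continuous_ofReal.comp continuous_snd).mul continuous_const)
  have habs : ∀ p : X × ℝ, ‖((r ↑p.1 : ℝ) : ℂ) * Complex.exp (↑p.2 * Complex.I)‖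
      = r ↑p.1 := by
    intro p
    rw [norm_mul, Complex.norm_exp_ofReal_mul_I, mul_one, Complex.norm_real,
      Real.norm_eq_abs, abs_of_pos (hrpos _)]
  have hFc : Continuous (fun x : X => F ↑x) := by
    have key : Continuous fun x : X => ∫ θ in (0:ℝ)..(2 * Real.pi),
        (fun (x : X) (θ : ℝ) =>
          (((r ↑x : ℝ) : ℂ) * Complex.exp (↑θ * Complex.I) * Complex.I) *
            (Polynomial.eval (((r ↑x : ℝ) : ℂ) * Complex.exp (↑θ * Complex.I))
                (Polynomial.derivative (q ↑x)) /
              Polynomial.eval (((r ↑x : ℝ) : ℂ) * Complex.exp (↑θ * Complex.I)) (q ↑x))) x θ := by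
      apply intervalIntegral.continuous_parametric_intervalIntegral_of_continuous'
      apply Continuous.mul
      · exact hcm.mul continuous_const
      · apply Continuous.div
        · exact hq2.comp (((continuous_subtype_val.comp continuous_fst)).prodMk hcm)
        · exact hq1.comp (((continuous_subtype_val.comp continuous_fst)).prodMk hcm)
        · intro p
          exact hne ↑p.1 p.1.2 _ (habs p)
    convert key using 2 with x
    rw [hFdef]
    simp only [circleIntegral, deriv_circleMap, smul_eq_mul]
    congr 1
    funext θ
    simp only [circleMap, Complex.ofReal_zero, zero_add]
  -- `N` as a continuous real-valued function on `X`
  have hNc : Continuous (fun x : X => ((N ↑x : ℕ) : ℝ)) := by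
    have h2pi : (2 * Real.pi * Complex.I) ≠ 0 := by
      simp [Real.pi_ne_zero, Complex.I_ne_zero]
    have : (fun x : X => ((N ↑x : ℕ) : ℝ))
        = fun x : X => ((F ↑x) / (2 * Real.pi * Complex.I)).re := by
      funext x
      rw [hF ↑x x.2, mul_comm, mul_div_assoc, div_self h2pi, mul_one]
      simp
    rw [this]
    exact Complex.continuous_re.comp (hFc.div_const _)
  -- intermediate value argument
  by_contra hcon
  have h0X : (0:ℝ) ∈ X := ⟨le_refl _, Real.pi_pos.le⟩
  have hπX : Real.pi ∈ X := ⟨Real.pi_pos.le, le_refl _⟩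
  set x0 : X := ⟨0, h0X⟩
  set x1 : X := ⟨Real.pi, hπX⟩
  rcases lt_or_gt_of_ne hcon with hlt | hgt
  · have hy : ((N 0 : ℝ) + 1/2) ∈ Set.Icc ((fun x : X => ((N ↑x : ℕ) : ℝ)) x0)
        ((fun x : X => ((N ↑x : ℕ) : ℝ)) x1) := by
      constructor
      · simp only [x0]; norm_num
      · simp only [x1]
        have : (N 0 : ℝ) + 1 ≤ (N Real.pi : ℝ) := by exact_mod_cast hlt
        linarith
    obtain ⟨c, hc⟩ := intermediate_value_univ x0 x1 hNc hy
    exact natcast_ne_add_half _ _ hc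
  · have hy : ((N Real.pi : ℝ) + 1/2) ∈ Set.Icc ((fun x : X => ((N ↑x : ℕ) : ℝ)) x1)
        ((fun x : X => ((N ↑x : ℕ) : ℝ)) x0) := by
      constructor
      · simp only [x1]; norm_num
      · simp only [x0]
        have : (N Real.pi : ℝ) + 1 ≤ (N 0 : ℝ) := by exact_mod_cast hgt
        linarith
    obtain ⟨c, hc⟩ := intermediate_value_univ x1 x0 hNc hy
    exact natcast_ne_add_half _ _ hc

lemma hK_pi : hK Real.pi = 0 := by
  simp [hK, Real.sin_pi, Real.sin_two_pi]

lemma hK_zero : hK 0 = 0 := by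
  simp [hK]

lemma hK_neg_pi : hK (-Real.pi) = 0 := by
  simp [hK, Real.sin_pi, Real.sin_two_pi]

lemma mem_K_of_circle (a b : ℝ) (hb : 0 < b) (hab : b < a) (φ : ℝ)
    (hφ : φ ∈ Set.Icc (0:ℝ) Real.pi) (z : ℂ)
    (hz : ‖z‖ = a + b * Real.cos φ) :
    (z ^ 2, hK φ * z) ∈ rudinKlein a b := by
  have hg : (0:ℝ) < a + b * Real.cos φ := by nlinarith [Real.neg_one_le_cos φ]
  set θ : ℝ := if Complex.arg z = Real.pi then -Real.pi else Complex.arg z with hθ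
  have hθmem : θ ∈ Set.Ico (-Real.pi) Real.pi := by
    by_cases h : Complex.arg z = Real.pi
    · rw [hθ, if_pos h]
      exact ⟨le_refl _, by linarith [Real.pi_pos]⟩
    · rw [hθ, if_neg h]
      have := Complex.arg_mem_Ioc z
      exact ⟨this.1.le, lt_of_le_of_ne this.2 h⟩
  have hexp : Complex.exp (↑θ * Complex.I) = Complex.exp (↑(Complex.arg z) * Complex.I) := by
    by_cases h : Complex.arg z = Real.pi
    · rw [hθ, if_pos h, h]
      rw [Complex.ofReal_neg, neg_mul, Complex.exp_neg, Complex.exp_pi_mul_I]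
      norm_num
    · rw [hθ, if_neg h]
  have hzeq : z = ((a + b * Real.cos φ : ℝ) : ℂ) * Complex.exp (↑θ * Complex.I) := by
    rw [hexp, ← hz, Complex.norm_mul_exp_arg_mul_I]
  set φ' : ℝ := if φ = Real.pi then -Real.pi else φ with hφ'
  have hφ'mem : φ' ∈ Set.Ico (-Real.pi) Real.pi := by
    by_cases h : φ = Real.pi
    · rw [hφ', if_pos h]
      exact ⟨le_refl _, by linarith [Real.pi_pos]⟩
    · rw [hφ', if_neg h]
      exact ⟨by linarith [hφ.1, Real.pi_pos], lt_of_le_of_ne hφ.2 h⟩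
  have hgK' : gK a b φ' = ((a + b * Real.cos φ : ℝ) : ℂ) := by
    by_cases h : φ = Real.pi
    · rw [hφ', if_pos h, h, gK, Real.cos_neg]
    · rw [hφ', if_neg h, gK]
  have hhK' : hK φ' = hK φ := by
    by_cases h : φ = Real.pi
    · rw [hφ', if_pos h, h, hK_neg_pi, hK_pi]
    · rw [hφ', if_neg h]
  refine ⟨θ, hθmem, φ', hφ'mem, ?_⟩
  rw [hgK', hhK', hzeq]
  have he2 : Complex.exp (2 * Complex.I * (θ:ℂ)) = Complex.exp ((θ:ℂ) * Complex.I) ^ 2 := by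
    rw [show (2 * Complex.I * (θ:ℂ)) = ((θ:ℂ) * Complex.I) + ((θ:ℂ) * Complex.I) by ring,
      Complex.exp_add, sq]
  have he1 : Complex.exp (Complex.I * (θ:ℂ)) = Complex.exp ((θ:ℂ) * Complex.I) := by
    rw [mul_comm]
  rw [Prod.ext_iff]
  constructor
  · simp only [he2]; ring
  · simp only [he1]; ring

lemma eval_QQ_evalP (P : MvPolynomial (Fin 2) ℂ) (t lam : ℂ) :
    Polynomial.eval lam (QQ P t) = evalP P (lam ^ 2, t * lam) := by
  rw [eval_QQ]; rfl

lemma nonvanishing_annulus (a b : ℝ) (hb : 0 < b) (hab : b < a)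
    (P : MvPolynomial (Fin 2) ℂ) (hP : ∀ x ∈ rudinKlein a b, evalP P x ≠ 0) :
    ∀ x ∈ annulusA a b, evalP P x ≠ 0 := by
  rintro ⟨z, w⟩ ⟨hw, hlow, hhigh⟩ hzero
  simp only at hw hlow hhigh
  subst hw
  set q : ℝ → Polynomial ℂ := fun φ => QQ P (hK φ) with hq
  set r : ℝ → ℝ := fun φ => a + b * Real.cos φ with hrdef
  have hrpos : ∀ φ, 0 < r φ := fun φ => by
    simp only [hrdef]; nlinarith [Real.neg_one_le_cos φ]
  have hcirc : ∀ φ ∈ Set.Icc (0:ℝ) Real.pi, ∀ ζ : ℂ, ‖ζ‖ = r φ →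
      Polynomial.eval ζ (q φ) ≠ 0 := by
    intro φ hφ ζ hζ
    rw [hq, eval_QQ_evalP]
    exact hP _ (mem_K_of_circle a b hb hab φ hφ ζ hζ)
  -- continuity
  have hKcont : Continuous hK := by
    unfold hK; fun_prop
  have hq1 : Continuous (fun p : ℝ × ℂ => Polynomial.eval p.2 (q p.1)) :=
    (cont_QQ P).1.comp ((hKcont.comp continuous_fst).prodMk continuous_snd)
  have hq2 : Continuous (fun p : ℝ × ℂ =>
      Polynomial.eval p.2 (Polynomial.derivative (q p.1))) :=
    (cont_QQ P).2.comp ((hKcont.comp continuous_fst).prodMk continuous_snd)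
  have hrcont : Continuous r := by
    rw [hrdef]; fun_prop
  have hconst := count_constant q r hq1 hq2 hrcont hrpos hcirc
  -- square root of z
  have hzne : z ≠ 0 := by
    intro h
    rw [h] at hlow
    simp only [norm_zero] at hlow
    nlinarith
  obtain ⟨l, hl⟩ := IsAlgClosed.exists_pow_nat_eq z (n := 2) (by norm_num)
  have habsl : ‖l‖ ^ 2 = ‖z‖ := by
    rw [← hl, norm_pow]
  have hl0 : 0 ≤ ‖l‖ := norm_nonneg l
  have hlo : a - b ≤ ‖l‖ := by
    apply le_of_pow_le_pow_left₀ (n := 2) (by norm_num) hl0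
    rw [habsl]; exact hlow
  have hhi : ‖l‖ ≤ a + b := by
    apply le_of_pow_le_pow_left₀ (n := 2) (by norm_num) (by linarith)
    rw [habsl]; exact hhigh
  have heval0 : Polynomial.eval l (q 0) = 0 := by
    rw [hq, eval_QQ_evalP, hK_zero, zero_mul, hl]
    exact hzero
  have hevalπ : Polynomial.eval l (q Real.pi) = 0 := by
    rw [hq, eval_QQ_evalP, hK_pi, zero_mul, hl]
    exact hzero
  have hr0 : r 0 = a + b := by simp [hrdef]
  have hrπ : r Real.pi = a - b := by simp [hrdef, Real.cos_pi]; ring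
  have hne_hi : ‖l‖ ≠ a + b := by
    intro h
    exact hcirc 0 ⟨le_refl _, Real.pi_pos.le⟩ l (by rw [h, hr0]) heval0
  have hne_lo : ‖l‖ ≠ a - b := by
    intro h
    exact hcirc Real.pi ⟨Real.pi_pos.le, le_refl _⟩ l (by rw [h, hrπ]) hevalπ
  have hlo' : a - b < ‖l‖ := lt_of_le_of_ne hlo (Ne.symm hne_lo)
  have hhi' : ‖l‖ < a + b := lt_of_le_of_ne hhi hne_hi
  -- q π = q 0
  have hqπ0 : q Real.pi = q 0 := by rw [hq]; simp [hK_pi, hK_zero]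
  have hq0ne : q 0 ≠ 0 := by
    intro h
    apply hcirc 0 ⟨le_refl _, Real.pi_pos.le⟩ ((a + b : ℝ) : ℂ)
      (by rw [Complex.norm_real, Real.norm_eq_abs, abs_of_pos (by linarith), hr0])
    rw [h]; simp
  have hlroot : l ∈ (q 0).roots := by
    rw [Polynomial.mem_roots']
    exact ⟨hq0ne, heval0⟩
  -- the two filtered multisets
  have hfilt_le : ((q 0).roots.filter fun ρ => ‖ρ‖ < a - b)
      ≤ ((q 0).roots.filter fun ρ => ‖ρ‖ < a + b) :=
    Multiset.monotone_filter_right _ (fun ρ h => lt_of_lt_of_le h (by linarith))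
  have hmem_hi : l ∈ ((q 0).roots.filter fun ρ => ‖ρ‖ < a + b) :=
    Multiset.mem_filter.2 ⟨hlroot, hhi'⟩
  have hmem_lo : l ∉ ((q 0).roots.filter fun ρ => ‖ρ‖ < a - b) := by
    intro h
    exact absurd (Multiset.mem_filter.1 h).2 (by simp; linarith)
  have hlt : Multiset.card ((q 0).roots.filter fun ρ => ‖ρ‖ < a - b)
      < Multiset.card ((q 0).roots.filter fun ρ => ‖ρ‖ < a + b) := by
    apply Multiset.card_lt_card
    exact lt_of_le_of_ne hfilt_le (fun h => hmem_lo (h ▸ hmem_hi))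
  rw [hr0, hrπ, hqπ0] at hconst
  omega

/-- The annulus `A` is contained in the rational hull of Rudin's Klein bottle `K`;
equivalently, every polynomial nonvanishing on `K` is nonvanishing on `A`. -/
theorem annulus_subset_rationalHull_rudinKlein (a b : ℝ) (hb : 0 < b) (hab : b < a) :
    annulusA a b ⊆ rationalHull (rudinKlein a b) ∧
      ∀ P : MvPolynomial (Fin 2) ℂ, (∀ x ∈ rudinKlein a b, evalP P x ≠ 0) →
        ∀ x ∈ annulusA a b, evalP P x ≠ 0 := by
  constructor
  · intro x hx P
    by_contra hnot
    set c := evalP P x with hc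
    have hQ : ∀ y ∈ rudinKlein a b, evalP (P - MvPolynomial.C c) y ≠ 0 := by
      intro y hy h0
      apply hnot
      refine ⟨y, hy, ?_⟩
      have : evalP (P - MvPolynomial.C c) y = evalP P y - c := by
        simp [evalP, map_sub]
      rw [this] at h0
      linear_combination h0
    have := nonvanishing_annulus a b hb hab (P - MvPolynomial.C c) hQ x hx
    apply this
    have : evalP (P - MvPolynomial.C c) x = evalP P x - c := by
      simp [evalP, map_sub]
    rw [this, ← hc, sub_self]
  · intro P hP x hx
    exact nonvanishing_annulus a b hb hab P hP x hx
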